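/- For any state ρ (a positive semidefinite operator of trace 1) and any two unit vectors |i⟩, |f⟩, the Kirkwood–Dirac quasiprobability value ξ = ⟨f,i⟩⟨i, ρ f⟩ satisfies Re(ξ) ≥ −1/8 and |Im(ξ)| ≤ 1/4. -/

import Mathlib

open Matrix
open scoped ComplexOrder


lemma gram_det (m k : ℕ) (A : Matrix (Fin m) (Fin k) ℂ) :
    0 ≤ (Aᴴ * A).det.re ∧ (Aᴴ * A).det.im = 0 := by
  have hG := Matrix.posSemidef_conjTranspose_mul_self A
  have h2 : (Aᴴ * A).det = ((∏ j, hG.1.eigenvalues j : ℝ) : ℂ) := by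
    rw [hG.1.det_eq_prod_eigenvalues]; push_cast; rfl
  rw [h2]
  constructor
  · rw [Complex.ofReal_re]
    exact Finset.prod_nonneg fun j _ => hG.eigenvalues_nonneg j
  · rw [Complex.ofReal_im]

lemma dot_conj (n : ℕ) (x y : Fin n → ℂ) :
    star x ⬝ᵥ y = (starRingEnd ℂ) (star y ⬝ᵥ x) := by
  simp [dotProduct, Pi.star_apply, map_sum, mul_comm]

lemma cs (n : ℕ) (u v : Fin n → ℂ) (hu : star u ⬝ᵥ u = 1) (hv : star v ⬝ᵥ v = 1) :
    Complex.normSq (star u ⬝ᵥ v) ≤ 1 := by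
  set B : Matrix (Fin n) (Fin 2) ℂ := Matrix.of fun r j => ![u, v] j r with hB
  have hent : ∀ j k : Fin 2, (Bᴴ * B) j k = star (![u, v] j) ⬝ᵥ ![u, v] k := by
    intro j k
    simp [hB, Matrix.mul_apply, Matrix.conjTranspose_apply, dotProduct]
  have hdet : (Bᴴ * B).det = 1 - Complex.normSq (star u ⬝ᵥ v) := by
    rw [Matrix.det_fin_two, hent, hent, hent, hent]
    simp only [Matrix.cons_val_zero, Matrix.cons_val_one, Matrix.head_cons, hu, hv]
    rw [dot_conj n v u, Complex.normSq_eq_conj_mul_self]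
    ring
  have h := (gram_det n 2 B).1
  rw [hdet] at h
  simp only [Complex.sub_re, Complex.one_re, Complex.ofReal_re] at h
  have : (((Complex.normSq (star u ⬝ᵥ v)) : ℂ)).re = Complex.normSq (star u ⬝ᵥ v) := Complex.ofReal_re _
  linarith [h]

lemma amgm3 (x y z : ℝ) (hx : 0 ≤ x) (hy : 0 ≤ y) (hz : 0 ≤ z) :
    27 * (x * y * z) ≤ (x + y + z)^3 := by
  nlinarith [mul_nonneg hx (sq_nonneg (y - z)), mul_nonneg hy (sq_nonneg (x - z)),
    mul_nonneg hz (sq_nonneg (x - y)), mul_nonneg (mul_nonneg hx hy) hz,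
    sq_nonneg (x - y), sq_nonneg (y - z), sq_nonneg (x - z)]

lemma keyReal (x y z R S : ℝ) (hx : 0 ≤ x) (hx1 : x ≤ 1) (hy : 0 ≤ y) (hy1 : y ≤ 1)
    (hz : 0 ≤ z) (hz1 : z ≤ 1) (habs : R^2 + S^2 = x * y * z)
    (hdet : x + y + z ≤ 1 + 2 * R) : -(1/8) ≤ R ∧ |S| ≤ 1/4 := by
  have hxyz1 : x * y * z ≤ 1 := by
    calc x * y * z ≤ 1 * 1 * 1 := by
          apply mul_le_one₀ (mul_le_one₀ hx1 hy hy1) hz hz1 |>.trans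
          norm_num
    _ = 1 := by norm_num
  have hRle : R ≤ 1 := by nlinarith [sq_nonneg S]
  have hsum : 0 ≤ x + y + z := by linarith
  have hcube : 27 * (R^2 + S^2) ≤ (1 + 2*R)^3 := by
    calc 27 * (R^2 + S^2) = 27 * (x*y*z) := by rw [habs]
    _ ≤ (x+y+z)^3 := amgm3 x y z hx hy hz
    _ ≤ (1+2*R)^3 := by apply pow_le_pow_left₀ hsum hdet
  constructor
  · nlinarith [sq_nonneg (R - 1), sq_nonneg S]
  · rw [abs_le]
    constructor <;> nlinarith [sq_nonneg (R - 1/4), sq_nonneg (S - 1/4), sq_nonneg (S + 1/4)]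

lemma pure_bound (n : ℕ) (u v w : Fin n → ℂ)
    (hu : star u ⬝ᵥ u = 1) (hv : star v ⬝ᵥ v = 1) (hw : star w ⬝ᵥ w = 1) :
    -(1/8) ≤ ((star u ⬝ᵥ v) * (star v ⬝ᵥ w) * (star w ⬝ᵥ u)).re ∧
      |((star u ⬝ᵥ v) * (star v ⬝ᵥ w) * (star w ⬝ᵥ u)).im| ≤ 1/4 := by
  set a := star u ⬝ᵥ v with ha
  set b := star v ⬝ᵥ w with hb
  set c := star w ⬝ᵥ u with hc
  set A : Matrix (Fin n) (Fin 3) ℂ := Matrix.of fun r j => ![u, v, w] j r with hA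
  have hent : ∀ j k : Fin 3, (Aᴴ * A) j k = star (![u, v, w] j) ⬝ᵥ ![u, v, w] k := by
    intro j k
    simp [hA, Matrix.mul_apply, Matrix.conjTranspose_apply, dotProduct]
  have hdet : (Aᴴ * A).det =
      ((1 - Complex.normSq a - Complex.normSq b - Complex.normSq c
        + 2 * (a * b * c).re : ℝ) : ℂ) := by
    rw [Matrix.det_fin_three]
    simp only [hent, Matrix.cons_val_zero, Matrix.cons_val_one, Matrix.head_cons,
      Matrix.cons_val_two, Matrix.tail_cons, hu, hv, hw]
    rw [dot_conj n v u, dot_conj n w v, dot_conj n u w, ← ha, ← hb, ← hc]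
    have h1 : ((Complex.normSq a : ℝ) : ℂ) = (starRingEnd ℂ) a * a :=
      Complex.normSq_eq_conj_mul_self
    have h2 : ((Complex.normSq b : ℝ) : ℂ) = (starRingEnd ℂ) b * b :=
      Complex.normSq_eq_conj_mul_self
    have h3 : ((Complex.normSq c : ℝ) : ℂ) = (starRingEnd ℂ) c * c :=
      Complex.normSq_eq_conj_mul_self
    have h4 : (((a * b * c).re : ℝ) : ℂ) + (((a * b * c).re : ℝ) : ℂ)
        = a * b * c + (starRingEnd ℂ) a * ((starRingEnd ℂ) b * (starRingEnd ℂ) c) := by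
      have := Complex.add_conj (a * b * c)
      rw [_root_.map_mul, _root_.map_mul] at this
      rw [two_mul] at this
      push_cast at this ⊢
      linear_combination -this
    push_cast
    linear_combination -h4 + h1 + h2 + h3
  have hkey := (gram_det n 3 A).1
  rw [hdet, Complex.ofReal_re] at hkey
  have hx := cs n u v hu hv
  have hy := cs n v w hv hw
  have hz := cs n w u hw hu
  rw [← ha] at hx; rw [← hb] at hy; rw [← hc] at hz
  have habs : ((a*b*c).re)^2 + ((a*b*c).im)^2
      = Complex.normSq a * Complex.normSq b * Complex.normSq c := by
    rw [← Complex.normSq_mul, ← Complex.normSq_mul, Complex.normSq_apply]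
    ring
  exact keyReal _ _ _ _ _ (Complex.normSq_nonneg a) hx (Complex.normSq_nonneg b) hy
    (Complex.normSq_nonneg c) hz habs (by linarith)
lemma decomp (n : ℕ) (U : Matrix (Fin n) (Fin n) ℂ) (d : Fin n → ℂ) (i f : Fin n → ℂ) :
    star i ⬝ᵥ (U * Matrix.diagonal d * star U).mulVec f
      = ∑ k, d k * ((star i ⬝ᵥ (fun r => U r k)) * ((star (fun r => U r k)) ⬝ᵥ f)) := by
  rw [Matrix.star_eq_conjTranspose, ← Matrix.mulVec_mulVec, ← Matrix.mulVec_mulVec,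
    Matrix.dotProduct_mulVec]
  rw [dotProduct]
  refine Finset.sum_congr rfl fun k _ => ?_
  rw [Matrix.mulVec_diagonal]
  have h1 : Matrix.vecMul (star i) U k = star i ⬝ᵥ (fun r => U r k) := rfl
  have h2 : Uᴴ.mulVec f k = star (fun r => U r k) ⬝ᵥ f := by
    simp [Matrix.mulVec, dotProduct, Matrix.conjTranspose_apply]
  rw [h1, h2]
  ring


/-- Bounds on Kirkwood–Dirac quasiprobability values:
for a density matrix `ρ` and unit vectors `i`, `f`,
`ξ = ⟨f,i⟩⟨i,ρf⟩` satisfies `Re ξ ≥ -1/8` and `|Im ξ| ≤ 1/4`. -/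
theorem kirkwood_dirac_bounds (n : ℕ) (ρ : Matrix (Fin n) (Fin n) ℂ)
    (hρ : ρ.PosSemidef) (htr : ρ.trace = 1)
    (i f : Fin n → ℂ) (hi : star i ⬝ᵥ i = 1) (hf : star f ⬝ᵥ f = 1)
    (ξ : ℂ) (hξ : ξ = (star f ⬝ᵥ i) * (star i ⬝ᵥ ρ.mulVec f)) :
    ξ.re ≥ -(1/8) ∧ |ξ.im| ≤ 1/4 := by
  have hH := hρ.1
  set U : Matrix (Fin n) (Fin n) ℂ := (hH.eigenvectorUnitary : Matrix (Fin n) (Fin n) ℂ) with hU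
  set lam := hH.eigenvalues with hlam
  have hspec : ρ = U * Matrix.diagonal (fun k => ((lam k : ℝ) : ℂ)) * star U := by
    have := hH.spectral_theorem
    rw [Unitary.conjStarAlgAut_apply] at this
    exact this
  -- unitary columns
  have hUU : star U * U = 1 := (Unitary.mem_iff.mp hH.eigenvectorUnitary.2).1
  have hcol : ∀ k, star (fun r => U r k) ⬝ᵥ (fun r => U r k) = 1 := by
    intro k
    have := congrFun (congrFun hUU k) k
    simp only [Matrix.mul_apply, Matrix.one_apply_eq] at this
    rw [← this]
    simp [dotProduct, Matrix.star_apply, Matrix.conjTranspose_apply,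
      Matrix.star_eq_conjTranspose]
  -- eigenvalues sum to one
  have hsum : ∑ k, lam k = 1 := by
    have h1 : ρ.trace = ∑ k, ((lam k : ℝ) : ℂ) := by
      rw [hspec, Matrix.trace_mul_cycle, hUU, one_mul, Matrix.trace_diagonal]
    rw [htr] at h1
    have : ((∑ k, lam k : ℝ) : ℂ) = 1 := by push_cast [← h1]; ring
    exact_mod_cast this
  have hnn : ∀ k, 0 ≤ lam k := fun k => hρ.eigenvalues_nonneg k
  -- decompose ξ
  have hξ2 : ξ = ∑ k, ((lam k : ℝ) : ℂ) *
      ((star f ⬝ᵥ i) * (star i ⬝ᵥ (fun r => U r k)) * (star (fun r => U r k) ⬝ᵥ f)) := by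
    rw [hξ, hspec, decomp, Finset.mul_sum]
    refine Finset.sum_congr rfl fun k _ => ?_
    ring
  -- bounds on each term
  have hterm : ∀ k : Fin n,
      -(1/8) ≤ ((star f ⬝ᵥ i) * (star i ⬝ᵥ (fun r => U r k)) * (star (fun r => U r k) ⬝ᵥ f)).re ∧
      |((star f ⬝ᵥ i) * (star i ⬝ᵥ (fun r => U r k)) * (star (fun r => U r k) ⬝ᵥ f)).im| ≤ 1/4 :=
    fun k => pure_bound n f i (fun r => U r k) hf hi (hcol k)
  have hre : ξ.re = ∑ k, lam k *
      ((star f ⬝ᵥ i) * (star i ⬝ᵥ (fun r => U r k)) * (star (fun r => U r k) ⬝ᵥ f)).re := by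
    rw [hξ2, Complex.re_sum]
    refine Finset.sum_congr rfl fun k _ => ?_
    simp [Complex.mul_re, Complex.ofReal_re, Complex.ofReal_im]
  have him : ξ.im = ∑ k, lam k *
      ((star f ⬝ᵥ i) * (star i ⬝ᵥ (fun r => U r k)) * (star (fun r => U r k) ⬝ᵥ f)).im := by
    rw [hξ2, Complex.im_sum]
    refine Finset.sum_congr rfl fun k _ => ?_
    simp [Complex.mul_im, Complex.ofReal_re, Complex.ofReal_im]
  constructor
  · rw [ge_iff_le, hre]
    calc -(1/8 : ℝ) = ∑ k, lam k * (-(1/8)) := by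
          rw [← Finset.sum_mul, hsum]; ring
    _ ≤ _ := Finset.sum_le_sum fun k _ =>
          mul_le_mul_of_nonneg_left (hterm k).1 (hnn k)
  · rw [him]
    calc |∑ k, lam k * (_ : ℂ).im| ≤ ∑ k, |lam k * (_ : ℂ).im| := Finset.abs_sum_le_sum_abs _ _
    _ ≤ ∑ k, lam k * (1/4) := by
          refine Finset.sum_le_sum fun k _ => ?_
          rw [abs_mul, abs_of_nonneg (hnn k)]
          exact mul_le_mul_of_nonneg_left (hterm k).2 (hnn k)
    _ = 1/4 := by rw [← Finset.sum_mul, hsum]; ring
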